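/- Let G be a countable group generated by a finite symmetric set S. For every k ≥ 1, every s ∈ S and every subset A ⊆ G, μ_{2(k+1)}(As) ≥ (k / ((k+1)·|S|²·ρ(G,S)²)) · μ_{2k}(A). More precisely, μ_{2(k+1)}(As) ≥ ((2k)·|A(2k,S)| / ((2k+2)·|A(2k+2,S)|)) · μ_{2k}(A). -/

import Mathlib

open Filter
open scoped Classical

noncomputable section

variable {G : Type*} [Group G]

/-- Words of length `n` with letters in `S` whose product lies in the subgroup `H`.
With `H = ⊥` this is the set `A(n,S)` of walks returning to the identity after `n` steps;
for general `H` it is `A_H(n,S)`. -/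
def wordsIn (S : Finset G) (H : Subgroup G) (n : ℕ) : Finset (Fin n → G) :=
  (Fintype.piFinset fun _ => S).filter fun w => (List.ofFn w).prod ∈ H

/-- `specRad S H` is the spectral radius of the Schreier graph of `H\G` w.r.t. `S`:
`lim (|A_H(2n,S)|/|S|^(2n))^(1/(2n))` (stated via `limsup`; the limit exists).
With `H = ⊥` this is the spectral radius `ρ(⟨S⟩,S)` of the Cayley graph of the group
generated by `S`; by convention it equals `1` when `S` is empty (trivial group). -/
def specRad (S : Finset G) (H : Subgroup G) : ℝ :=
  if S.Nonempty then
    Filter.limsup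
      (fun n : ℕ =>
        (((wordsIn S H (2 * n)).card : ℝ) / (S.card : ℝ) ^ (2 * n)) ^ ((1 : ℝ) / (2 * (n : ℝ))))
      Filter.atTop
  else 1

/-- `conjSubgroup g H = H^g = g⁻¹ H g`. -/
def conjSubgroup (g : G) (H : Subgroup G) : Subgroup G :=
  Subgroup.map (MulAut.conj g⁻¹).toMonoidHom H

/-- `prefixProd w i = w(i) = a₁⋯aᵢ`, the position of the walk `w` after `i` steps. -/
def prefixProd {n : ℕ} (w : Fin n → G) (i : ℕ) : G := ((List.ofFn w).take i).prod

/-- `muMass S n A = μₙ(A) = (1/(n|A(n,S)|)) Σ_{w ∈ A(n,S)} #{1 ≤ i ≤ n : w(i) ∈ A}`,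
the expected proportion of time a uniformly random recurrent walk of length `n` spends in `A`. -/
def muMass (S : Finset G) (n : ℕ) (A : Set G) : ℝ :=
  (1 / ((n : ℝ) * ((wordsIn S ⊥ n).card : ℝ))) *
    ∑ w ∈ wordsIn S ⊥ n, (((Finset.Icc 1 n).filter fun i => prefixProd w i ∈ A).card : ℝ)

/-! ### Auxiliary material -/

namespace MuAux

/-- The list with `s, s⁻¹` inserted after position `i`. -/
def insList (s : G) (l : List G) (i : ℕ) : List G := l.take i ++ s :: s⁻¹ :: l.drop i

lemma insList_length (s : G) (l : List G) (i : ℕ) :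
    (insList s l i).length = l.length + 2 := by
  simp [insList]; omega

lemma insList_prod (s : G) (l : List G) (i : ℕ) :
    (insList s l i).prod = l.prod := by
  rw [insList, List.prod_append, List.prod_cons, List.prod_cons, mul_inv_cancel_left,
    List.prod_take_mul_prod_drop]

lemma length_take_of_le {l : List G} {i : ℕ} (h : i ≤ l.length) :
    (l.take i).length = i := by
  simp; omega

lemma insList_take (s : G) (l : List G) {i : ℕ} (h : i ≤ l.length) :
    (insList s l i).take (i + 1) = l.take i ++ [s] := by
  rw [insList, show i + 1 = (l.take i).length + 1 by rw [length_take_of_le h],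
    List.take_append]
  simp

lemma insList_take' (s : G) (l : List G) {i : ℕ} (h : i ≤ l.length) :
    (insList s l i).take i = l.take i := by
  rw [insList, List.take_append_of_le_length (by rw [length_take_of_le h]),
    List.take_take]
  simp

lemma insList_drop (s : G) (l : List G) {i : ℕ} (h : i ≤ l.length) :
    (insList s l i).drop (i + 2) = l.drop i := by
  rw [insList, show i + 2 = (l.take i).length + 2 by rw [length_take_of_le h],
    List.drop_append]
  simp

lemma insList_inj (s : G) {l l' : List G} {i : ℕ} (h : i ≤ l.length) (h' : i ≤ l'.length)
    (heq : insList s l i = insList s l' i) : l = l' := by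
  have h1 : l.take i = l'.take i := by
    rw [← insList_take' s l h, ← insList_take' s l' h', heq]
  have h2 : l.drop i = l'.drop i := by
    rw [← insList_drop s l h, ← insList_drop s l' h', heq]
  rw [← List.take_append_drop i l, ← List.take_append_drop i l', h1, h2]

lemma mem_insList {s a : G} {l : List G} {i : ℕ} (ha : a ∈ insList s l i) :
    a ∈ l ∨ a = s ∨ a = s⁻¹ := by
  simp only [insList, List.mem_append, List.mem_cons] at ha
  rcases ha with h | h | h | h
  · exact Or.inl (List.mem_of_mem_take h)
  · exact Or.inr (Or.inl h)
  · exact Or.inr (Or.inr h)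
  · exact Or.inl (List.mem_of_mem_drop h)

/-- The word with `s, s⁻¹` inserted after position `i`. -/
def insWord (s : G) {n : ℕ} (w : Fin n → G) (i : ℕ) : Fin (n + 2) → G :=
  fun j => (insList s (List.ofFn w) i)[(j : ℕ)]'(by
    rw [insList_length, List.length_ofFn]; exact j.isLt)

lemma ofFn_insWord (s : G) {n : ℕ} (w : Fin n → G) (i : ℕ) :
    List.ofFn (insWord s w i) = insList s (List.ofFn w) i := by
  apply List.ext_getElem
  · simp [insList_length]
  · intro j h1 h2
    rw [List.getElem_ofFn]
    rfl

lemma insWord_mem_wordsIn {S : Finset G} {s : G} (hs : s ∈ S) (hs' : s⁻¹ ∈ S)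
    {n : ℕ} {w : Fin n → G} (hw : w ∈ wordsIn S ⊥ n) (i : ℕ) :
    insWord s w i ∈ wordsIn S ⊥ (n + 2) := by
  rw [wordsIn, Finset.mem_filter] at hw ⊢
  obtain ⟨hw1, hw2⟩ := hw
  rw [Fintype.mem_piFinset] at hw1
  constructor
  · rw [Fintype.mem_piFinset]
    intro j
    have hmem : insWord s w i j ∈ insList s (List.ofFn w) i := List.getElem_mem _
    rcases mem_insList hmem with h | h | h
    · obtain ⟨t, ht⟩ := List.mem_ofFn.mp h
      rw [← ht]; exact hw1 _
    · rw [h]; exact hs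
    · rw [h]; exact hs'
  · rw [Subgroup.mem_bot] at hw2 ⊢
    rw [ofFn_insWord, insList_prod, hw2]

lemma prefixProd_insWord (s : G) {n : ℕ} (w : Fin n → G) {i : ℕ} (h : i ≤ n) :
    prefixProd (insWord s w i) (i + 1) = prefixProd w i * s := by
  rw [prefixProd, prefixProd, ofFn_insWord,
    insList_take s _ (by rw [List.length_ofFn]; exact h), List.prod_append,
    List.prod_singleton]

lemma insWord_inj (s : G) {n : ℕ} {w w' : Fin n → G} {i : ℕ} (h : i ≤ n)
    (heq : insWord s w i = insWord s w' i) : w = w' := by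
  apply List.ofFn_injective
  apply insList_inj s (l := List.ofFn w) (l' := List.ofFn w') (i := i)
    (by rw [List.length_ofFn]; exact h) (by rw [List.length_ofFn]; exact h)
  rw [← ofFn_insWord, ← ofFn_insWord, heq]

/-- The key counting inequality: inserting `s, s⁻¹` after a visit to `A` is injective. -/
lemma count_le (S : Finset G) {s : G} (hs : s ∈ S) (hs' : s⁻¹ ∈ S) (n : ℕ) (A : Set G) :
    ∑ w ∈ wordsIn S ⊥ n, ((Finset.Icc 1 n).filter fun i => prefixProd w i ∈ A).card ≤
    ∑ w ∈ wordsIn S ⊥ (n + 2),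
      ((Finset.Icc 1 (n + 2)).filter
        fun i => prefixProd w i ∈ ((fun a => a * s) '' A)).card := by
  classical
  have e1 : ∑ w ∈ wordsIn S ⊥ n, ((Finset.Icc 1 n).filter fun i => prefixProd w i ∈ A).card
      = (((wordsIn S ⊥ n) ×ˢ (Finset.Icc 1 n)).filter fun p => prefixProd p.1 p.2 ∈ A).card := by
    rw [Finset.card_filter, Finset.sum_product]
    exact Finset.sum_congr rfl fun w _ => Finset.card_filter _ _
  have e2 : ∑ w ∈ wordsIn S ⊥ (n + 2),
        ((Finset.Icc 1 (n + 2)).filter fun i => prefixProd w i ∈ ((fun a => a * s) '' A)).card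
      = (((wordsIn S ⊥ (n + 2)) ×ˢ (Finset.Icc 1 (n + 2))).filter
          fun p => prefixProd p.1 p.2 ∈ ((fun a => a * s) '' A)).card := by
    rw [Finset.card_filter, Finset.sum_product]
    exact Finset.sum_congr rfl fun w _ => Finset.card_filter _ _
  rw [e1, e2]
  apply Finset.card_le_card_of_injOn (fun p => (insWord s p.1 p.2, p.2 + 1))
  · rintro ⟨w, i⟩ hp
    simp only [Finset.mem_coe, Finset.mem_filter, Finset.mem_product, Finset.mem_Icc] at hp ⊢
    obtain ⟨⟨hw, hi⟩, hA⟩ := hp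
    refine ⟨⟨insWord_mem_wordsIn hs hs' hw i, by omega⟩, ?_⟩
    rw [prefixProd_insWord s w hi.2]
    exact ⟨_, hA, rfl⟩
  · rintro ⟨w, i⟩ hp ⟨w', i'⟩ hp' heq
    simp only [Finset.mem_coe, Finset.mem_filter, Finset.mem_product, Finset.mem_Icc] at hp hp'
    obtain ⟨⟨hw, hi⟩, hA⟩ := hp
    have h2 : i = i' := by
      have := congrArg Prod.snd heq
      simpa using this
    subst h2
    have h1 : insWord s w i = insWord s w' i := congrArg Prod.fst heq
    rw [insWord_inj s hi.2 h1]

/-! ### Nonemptiness and upper bounds on `|A(n,S)|` -/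

lemma append_mem_wordsIn {S : Finset G} {a b : ℕ} {u : Fin a → G} {v : Fin b → G}
    (hu : u ∈ wordsIn S ⊥ a) (hv : v ∈ wordsIn S ⊥ b) :
    Fin.append u v ∈ wordsIn S ⊥ (a + b) := by
  rw [wordsIn, Finset.mem_filter, Fintype.mem_piFinset] at hu hv ⊢
  obtain ⟨hu1, hu2⟩ := hu
  obtain ⟨hv1, hv2⟩ := hv
  rw [Subgroup.mem_bot] at hu2 hv2 ⊢
  constructor
  · intro j
    refine Fin.addCases (fun i => ?_) (fun i => ?_) j
    · rw [Fin.append_left]; exact hu1 i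
    · rw [Fin.append_right]; exact hv1 i
  · rw [List.ofFn_fin_append, List.prod_append, hu2, hv2, one_mul]

lemma wordsIn_even_nonempty (S : Finset G) {s : G} (hs : s ∈ S) (hs' : s⁻¹ ∈ S) (m : ℕ) :
    0 < (wordsIn S ⊥ (2 * m)).card := by
  rw [Finset.card_pos]
  induction m with
  | zero =>
      rw [Nat.mul_zero]
      refine ⟨Fin.elim0, ?_⟩
      rw [wordsIn, Finset.mem_filter, Fintype.mem_piFinset]
      exact ⟨fun i => i.elim0, by simp⟩
  | succ m ih =>
      obtain ⟨w, hw⟩ := ih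
      have hpair : (![s, s⁻¹] : Fin 2 → G) ∈ wordsIn S ⊥ 2 := by
        rw [wordsIn, Finset.mem_filter, Fintype.mem_piFinset]
        constructor
        · intro j; fin_cases j <;> simpa
        · simp [Subgroup.mem_bot]
      have := append_mem_wordsIn hw hpair
      rw [show 2 * (m + 1) = 2 * m + 2 by ring]
      exact ⟨_, this⟩

lemma card_wordsIn_le (S : Finset G) (H : Subgroup G) (n : ℕ) :
    (wordsIn S H n).card ≤ S.card ^ n := by
  calc (wordsIn S H n).card ≤ (Fintype.piFinset fun _ : Fin n => S).card :=
        Finset.card_filter_le _ _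
    _ = S.card ^ n := by rw [Fintype.card_piFinset]; simp

/-! ### Log-convexity of `n ↦ |A(2n,S)|` -/

/-- All words of length `n`. -/
def WW (S : Finset G) (n : ℕ) : Finset (Fin n → G) := Fintype.piFinset fun _ => S

/-- Product of a word. -/
def PP {n : ℕ} (w : Fin n → G) : G := (List.ofFn w).prod

/-- Number of words of length `n` with product `g`. -/
def NN (S : Finset G) (n : ℕ) (g : G) : ℕ := ((WW S n).filter fun w => PP w = g).card

lemma card_wordsIn_split (S : Finset G) (a b : ℕ) :
    (wordsIn S ⊥ (a + b)).card = ∑ u ∈ WW S a, NN S b (PP u)⁻¹ := by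
  classical
  have hbij : (wordsIn S ⊥ (a + b)).card
      = (((WW S a) ×ˢ (WW S b)).filter fun p => PP p.1 * PP p.2 = 1).card := by
    apply Finset.card_bij'
      (fun w _ => ((fun i => w (Fin.castAdd b i)), (fun i => w (Fin.natAdd a i))))
      (fun p _ => Fin.append p.1 p.2)
    · intro w hw
      rw [wordsIn, Finset.mem_filter, Fintype.mem_piFinset, Subgroup.mem_bot] at hw
      rw [Finset.mem_filter, Finset.mem_product]
      refine ⟨⟨?_, ?_⟩, ?_⟩
      · rw [WW, Fintype.mem_piFinset]; intro i; exact hw.1 _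
      · rw [WW, Fintype.mem_piFinset]; intro i; exact hw.1 _
      · dsimp only
        rw [PP, PP, ← List.prod_append, ← List.ofFn_fin_append, Fin.append_castAdd_natAdd, hw.2]
    · intro p hp
      rw [Finset.mem_filter, Finset.mem_product] at hp
      rw [wordsIn, Finset.mem_filter, Fintype.mem_piFinset, Subgroup.mem_bot]
      constructor
      · intro j
        refine Fin.addCases (fun i => ?_) (fun i => ?_) j
        · rw [Fin.append_left]
          exact Fintype.mem_piFinset.mp hp.1.1 i
        · rw [Fin.append_right]
          exact Fintype.mem_piFinset.mp hp.1.2 i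
      · rw [List.ofFn_fin_append, List.prod_append]
        exact hp.2
    · intro w hw
      exact Fin.append_castAdd_natAdd
    · intro p hp
      refine Prod.ext ?_ ?_
      · funext i; exact Fin.append_left _ _ i
      · funext i; exact Fin.append_right _ _ i
  rw [hbij, Finset.card_filter, Finset.sum_product]
  apply Finset.sum_congr rfl
  intro u hu
  rw [← Finset.card_filter, NN]
  congr 1
  apply Finset.filter_congr
  intro v hv
  simp only [eq_iff_iff]
  constructor
  · intro h
    exact (mul_eq_one_iff_inv_eq.mp h).symm
  · intro h
    rw [h, mul_inv_cancel]

lemma prod_ofFn_rev_inv {n : ℕ} (f : Fin n → G) :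
    (List.ofFn fun i => (f i.rev)⁻¹).prod = (List.ofFn f).prod⁻¹ := by
  induction n with
  | zero => simp
  | succ n ih =>
      rw [List.ofFn_succ' (fun i => (f i.rev)⁻¹), List.prod_concat, List.ofFn_succ (f := f),
        List.prod_cons]
      have h1 : (fun i : Fin n => (f (Fin.castSucc i).rev)⁻¹)
          = fun i : Fin n => (((fun j => f j.succ) : Fin n → G) i.rev)⁻¹ := by
        funext i
        rw [Fin.rev_castSucc]
      simp only [Fin.rev_last]
      calc (List.ofFn fun i : Fin n => (f (Fin.castSucc i).rev)⁻¹).prod * (f 0)⁻¹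
          = (List.ofFn fun i : Fin n => ((fun j => f j.succ) i.rev)⁻¹).prod * (f 0)⁻¹ := by
            rw [h1]
        _ = (List.ofFn fun i : Fin n => f i.succ).prod⁻¹ * (f 0)⁻¹ := by
            exact congrArg (fun x => x * (f 0)⁻¹) (ih fun j => f j.succ)
        _ = (f 0 * (List.ofFn fun i : Fin n => f i.succ).prod)⁻¹ := by
            rw [mul_inv_rev]

lemma NN_inv (S : Finset G) (hsymm : ∀ s ∈ S, s⁻¹ ∈ S) (b : ℕ) (g : G) :
    NN S b g⁻¹ = NN S b g := by
  classical
  rw [NN, NN]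
  refine Finset.card_nbij' (fun v => fun i => (v i.rev)⁻¹) (fun v => fun i => (v i.rev)⁻¹)
    ?_ ?_ ?_ ?_
  · intro v hv
    rw [Finset.mem_coe, Finset.mem_filter, WW, Fintype.mem_piFinset] at hv ⊢
    refine ⟨fun i => hsymm _ (hv.1 _), ?_⟩
    show (List.ofFn fun i => (v i.rev)⁻¹).prod = g
    rw [prod_ofFn_rev_inv, show (List.ofFn v).prod = PP v from rfl, hv.2, inv_inv]
  · intro v hv
    rw [Finset.mem_coe, Finset.mem_filter, WW, Fintype.mem_piFinset] at hv ⊢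
    refine ⟨fun i => hsymm _ (hv.1 _), ?_⟩
    show (List.ofFn fun i => (v i.rev)⁻¹).prod = g⁻¹
    rw [prod_ofFn_rev_inv, show (List.ofFn v).prod = PP v from rfl, hv.2]
  · intro v hv
    funext i
    simp [Fin.rev_rev]
  · intro v hv
    funext i
    simp [Fin.rev_rev]

lemma card_wordsIn_repr (S : Finset G) (a b : ℕ) {T : Finset G}
    (hT : (WW S a).image PP ⊆ T) :
    (wordsIn S ⊥ (a + b)).card = ∑ g ∈ T, NN S a g * NN S b g⁻¹ := by
  classical
  rw [card_wordsIn_split,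
    ← Finset.sum_fiberwise_of_maps_to' (t := T) (g := PP)
      (fun u hu => hT (Finset.mem_image_of_mem _ hu)) (fun g => NN S b g⁻¹)]
  apply Finset.sum_congr rfl
  intro g hg
  rw [Finset.sum_const, smul_eq_mul]
  rfl

lemma card_logconvex (S : Finset G) (hsymm : ∀ s ∈ S, s⁻¹ ∈ S) (m : ℕ) :
    (((wordsIn S ⊥ (2 * (m + 1))).card : ℝ)) ^ 2
      ≤ ((wordsIn S ⊥ (2 * m)).card : ℝ) * ((wordsIn S ⊥ (2 * (m + 2))).card : ℝ) := by
  classical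
  set T := ((WW S m).image PP) ∪ ((WW S (m + 2)).image PP) with hT
  have h1 : (wordsIn S ⊥ (2 * (m + 1))).card = ∑ g ∈ T, NN S m g * NN S (m + 2) g := by
    rw [show 2 * (m + 1) = m + (m + 2) by ring,
      card_wordsIn_repr S m (m + 2) Finset.subset_union_left]
    exact Finset.sum_congr rfl fun g _ => by rw [NN_inv S hsymm]
  have h2 : (wordsIn S ⊥ (2 * m)).card = ∑ g ∈ T, NN S m g * NN S m g := by
    rw [show 2 * m = m + m by ring,
      card_wordsIn_repr S m m Finset.subset_union_left]
    exact Finset.sum_congr rfl fun g _ => by rw [NN_inv S hsymm]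
  have h3 : (wordsIn S ⊥ (2 * (m + 2))).card = ∑ g ∈ T, NN S (m + 2) g * NN S (m + 2) g := by
    rw [show 2 * (m + 2) = (m + 2) + (m + 2) by ring,
      card_wordsIn_repr S (m + 2) (m + 2) Finset.subset_union_right]
    exact Finset.sum_congr rfl fun g _ => by rw [NN_inv S hsymm]
  rw [h1, h2, h3]
  push_cast
  have h := Finset.sum_mul_sq_le_sq_mul_sq T (fun g => (NN S m g : ℝ))
    (fun g => (NN S (m + 2) g : ℝ))
  simp only [pow_two] at h ⊢
  exact h

/-! ### Lower bound on the limsup via log-convexity -/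

lemma limsup_logconvex (c : ℕ → ℝ) (q : ℝ) (hq0 : 0 < q)
    (hc : ∀ m, 0 < c m) (hcle : ∀ m, c m ≤ q ^ (2 * m))
    (hconv : ∀ m, c (m + 1) ^ 2 ≤ c m * c (m + 2)) (k : ℕ) :
    ∃ e : ℝ, 0 < e ∧
      e ≤ Filter.limsup (fun n : ℕ => (c n / q ^ (2 * n)) ^ ((1 : ℝ) / (2 * (n : ℝ))))
            Filter.atTop ∧
      c (k + 1) ≤ e ^ 2 * (q ^ 2 * c k) := by
  set p : ℕ → ℝ := fun m => c m / q ^ (2 * m) with hpdef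
  have hppos : ∀ m, 0 < p m := fun m => div_pos (hc m) (pow_pos hq0 _)
  have hple : ∀ m, p m ≤ 1 := fun m => (div_le_one (pow_pos hq0 _)).mpr (hcle m)
  set v : ℕ → ℝ := fun m => Real.log (p m) with hvdef
  set dk : ℝ := v (k + 1) - v k with hdkdef
  refine ⟨Real.exp (dk / 2), Real.exp_pos _, ?_, ?_⟩
  · -- p-log-convexity
    have hpconv : ∀ m, p (m + 1) ^ 2 ≤ p m * p (m + 2) := by
      intro m
      have hden : (0 : ℝ) < q ^ (2 * m) * q ^ (2 * (m + 2)) := by positivity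
      rw [hpdef]
      simp only
      rw [div_pow, div_mul_div_comm, div_le_div_iff₀ (by positivity) hden]
      have hqpow : q ^ (2 * m) * q ^ (2 * (m + 2)) = (q ^ (2 * (m + 1))) ^ 2 := by
        rw [← pow_add, ← pow_mul]
        ring_nf
      rw [hqpow]
      exact mul_le_mul_of_nonneg_right (hconv m) (by positivity)
    have hvconv : ∀ m, v (m + 1) - v m ≤ v (m + 2) - v (m + 1) := by
      intro m
      have h := Real.log_le_log (pow_pos (hppos (m + 1)) 2) (hpconv m)
      rw [Real.log_pow, Real.log_mul (hppos m).ne' (hppos (m + 2)).ne'] at h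
      simp only [hvdef]
      push_cast at h
      linarith
    have hdmono : ∀ m, k ≤ m → dk ≤ v (m + 1) - v m := by
      intro m hm
      induction m, hm using Nat.le_induction with
      | base => simp [hdkdef]
      | succ m hm ih => exact le_trans ih (hvconv m)
    have hlin : ∀ j : ℕ, v k + j * dk ≤ v (k + j) := by
      intro j
      induction j with
      | zero => simp
      | succ j ih =>
          have h := hdmono (k + j) (Nat.le_add_right _ _)
          calc v k + ((j : ℕ) + 1 : ℕ) * dk = (v k + j * dk) + dk := by push_cast; ring
            _ ≤ v (k + j) + dk := by linarith
            _ ≤ v (k + (j + 1)) := by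
                rw [show k + (j + 1) = (k + j) + 1 by ring]
                linarith
    set C : ℝ := v k - k * dk with hCdef
    have hCm : ∀ m : ℕ, k ≤ m → C + m * dk ≤ v m := by
      intro m hm
      have h := hlin (m - k)
      rw [show k + (m - k) = m by omega] at h
      have hcast : ((m - k : ℕ) : ℝ) = (m : ℝ) - (k : ℝ) := by
        rw [Nat.cast_sub hm]
      rw [hcast] at h
      rw [hCdef]
      linarith
    set gseq : ℕ → ℝ := fun m => Real.exp ((C + m * dk) / (2 * m)) with hgdef
    have hg_tendsto : Filter.Tendsto gseq Filter.atTop (nhds (Real.exp (dk / 2))) := by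
      apply (Real.continuous_exp.tendsto _).comp
      have h0 : Filter.Tendsto (fun m : ℕ => (C / 2) * (1 / m) + dk / 2) Filter.atTop
          (nhds (dk / 2)) := by
        have h1 := (tendsto_one_div_atTop_nhds_zero_nat.const_mul (C / 2)).add_const (dk / 2)
        simpa using h1
      apply h0.congr'
      filter_upwards [Filter.eventually_ge_atTop 1] with m hm
      have hm0 : (m : ℝ) ≠ 0 := by
        have : (0 : ℝ) < m := by exact_mod_cast hm
        exact this.ne'
      field_simp
    have hF_bdd : ∀ n : ℕ, (p n) ^ ((1 : ℝ) / (2 * (n : ℝ))) ≤ 1 := fun n =>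
      Real.rpow_le_one (hppos n).le (hple n) (by positivity)
    have hgF : gseq ≤ᶠ[Filter.atTop] fun n : ℕ => (p n) ^ ((1 : ℝ) / (2 * (n : ℝ))) := by
      filter_upwards [Filter.eventually_ge_atTop (max k 1)] with m hm
      have hk1 : k ≤ m := le_trans (le_max_left _ _) hm
      have h1 : 1 ≤ m := le_trans (le_max_right _ _) hm
      have hm0 : (0 : ℝ) < 2 * (m : ℝ) := by
        have : (0 : ℝ) < m := by exact_mod_cast h1
        linarith
      rw [Real.rpow_def_of_pos (hppos m), mul_one_div]
      rw [hgdef]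
      simp only
      apply Real.exp_le_exp.mpr
      have hnum := hCm m hk1
      exact (div_le_div_iff_of_pos_right hm0).mpr hnum
    calc Real.exp (dk / 2) = Filter.limsup gseq Filter.atTop := (hg_tendsto.limsup_eq).symm
      _ ≤ Filter.limsup (fun n : ℕ => (p n) ^ ((1 : ℝ) / (2 * (n : ℝ)))) Filter.atTop := by
          exact Filter.limsup_le_limsup hgF
            (Filter.IsBoundedUnder.isCoboundedUnder_le
              (Filter.isBoundedUnder_of ⟨0, fun x => (Real.exp_pos _).le⟩))
            (Filter.isBoundedUnder_of ⟨1, hF_bdd⟩)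
  · have hexp : Real.exp dk = p (k + 1) / p k := by
      rw [hdkdef, hvdef]
      simp only
      rw [← Real.log_div (hppos (k + 1)).ne' (hppos k).ne']
      exact Real.exp_log (div_pos (hppos _) (hppos _))
    have he2 : Real.exp (dk / 2) ^ 2 = Real.exp dk := by
      rw [sq, ← Real.exp_add]
      congr 1
      ring
    have hkey : Real.exp (dk / 2) ^ 2 * (q ^ 2 * c k) = c (k + 1) := by
      rw [he2, hexp, hpdef]
      simp only
      have hq2 : q ^ (2 * (k + 1)) = q ^ (2 * k) * q ^ 2 := by
        rw [← pow_add]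
        ring_nf
      have hne1 : q ≠ 0 := hq0.ne'
      have hne2 : c k ≠ 0 := (hc k).ne'
      have hne3 : q ^ (2 * k) ≠ 0 := pow_ne_zero _ hne1
      rw [hq2]
      field_simp
    exact (hkey.symm).le

lemma specRad_bound (S : Finset G) (hsymm : ∀ s ∈ S, s⁻¹ ∈ S) {s : G} (hs : s ∈ S) (k : ℕ) :
    0 < specRad S ⊥ ∧
    ((wordsIn S ⊥ (2 * (k + 1))).card : ℝ)
      ≤ specRad S ⊥ ^ 2 * ((S.card : ℝ) ^ 2 * ((wordsIn S ⊥ (2 * k)).card : ℝ)) := by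
  have hs' : s⁻¹ ∈ S := hsymm s hs
  have hSne : S.Nonempty := ⟨s, hs⟩
  have hq0 : (0 : ℝ) < (S.card : ℝ) := by
    exact_mod_cast Finset.card_pos.mpr hSne
  obtain ⟨e, he0, hele, heb⟩ := limsup_logconvex
    (fun m => ((wordsIn S ⊥ (2 * m)).card : ℝ)) ((S.card : ℝ)) hq0
    (fun m => by
      show (0 : ℝ) < ((wordsIn S ⊥ (2 * m)).card : ℝ)
      exact_mod_cast wordsIn_even_nonempty S hs hs' m)
    (fun m => by
      show ((wordsIn S ⊥ (2 * m)).card : ℝ) ≤ ((S.card : ℝ)) ^ (2 * m)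
      exact_mod_cast card_wordsIn_le S ⊥ (2 * m))
    (fun m => by
      have h := card_logconvex S hsymm m
      simpa [sq] using h)
    k
  have hspec : specRad S ⊥ =
      Filter.limsup
        (fun n : ℕ =>
          (((wordsIn S ⊥ (2 * n)).card : ℝ) / (S.card : ℝ) ^ (2 * n)) ^ ((1 : ℝ) / (2 * (n : ℝ))))
        Filter.atTop := by
    rw [specRad, if_pos hSne]
  have hrho : e ≤ specRad S ⊥ := by
    rw [hspec]
    exact hele
  have hrho0 : 0 < specRad S ⊥ := lt_of_lt_of_le he0 hrho
  refine ⟨hrho0, ?_⟩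
  calc ((wordsIn S ⊥ (2 * (k + 1))).card : ℝ)
      ≤ e ^ 2 * ((S.card : ℝ) ^ 2 * ((wordsIn S ⊥ (2 * k)).card : ℝ)) := heb
    _ ≤ specRad S ⊥ ^ 2 * ((S.card : ℝ) ^ 2 * ((wordsIn S ⊥ (2 * k)).card : ℝ)) := by
        apply mul_le_mul_of_nonneg_right (pow_le_pow_left₀ he0.le hrho 2) (by positivity)

end MuAux


/-- **Lemma.** For every `k ≥ 1`, `s ∈ S` and `A ⊆ G`:
`μ_{2(k+1)}(As) ≥ (k/((k+1)|S|²ρ(G,S)²))·μ_{2k}(A)`, and more precisely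
`μ_{2(k+1)}(As) ≥ ((2k)|A(2k,S)|/((2k+2)|A(2k+2,S)|))·μ_{2k}(A)`. -/
theorem mu_quasi_invariant_step [Countable G]
    (S : Finset G) (hgen : Subgroup.closure (S : Set G) = ⊤)
    (hsymm : ∀ s ∈ S, s⁻¹ ∈ S)
    (k : ℕ) (hk : 1 ≤ k) (s : G) (hs : s ∈ S) (A : Set G) :
    muMass S (2 * (k + 1)) ((fun a => a * s) '' A) ≥
        ((k : ℝ) / (((k : ℝ) + 1) * (S.card : ℝ) ^ 2 * specRad S ⊥ ^ 2)) * muMass S (2 * k) A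
      ∧
    muMass S (2 * (k + 1)) ((fun a => a * s) '' A) ≥
        ((2 * (k : ℝ)) * ((wordsIn S ⊥ (2 * k)).card : ℝ) /
            ((2 * (k : ℝ) + 2) * ((wordsIn S ⊥ (2 * k + 2)).card : ℝ))) * muMass S (2 * k) A := by
  classical
  have hs' : s⁻¹ ∈ S := hsymm s hs
  have hidx : 2 * (k + 1) = 2 * k + 2 := by ring
  have hc1 : (0 : ℝ) < ((wordsIn S ⊥ (2 * k)).card : ℝ) := by
    exact_mod_cast MuAux.wordsIn_even_nonempty S hs hs' k
  have hc2 : (0 : ℝ) < ((wordsIn S ⊥ (2 * k + 2)).card : ℝ) := by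
    have h := MuAux.wordsIn_even_nonempty S hs hs' (k + 1)
    rw [hidx] at h
    exact_mod_cast h
  have hq0 : (0 : ℝ) < (S.card : ℝ) := by
    exact_mod_cast Finset.card_pos.mpr ⟨s, hs⟩
  have hk0 : (0 : ℝ) < (k : ℝ) := by exact_mod_cast hk
  obtain ⟨hρ0, hcard⟩ := MuAux.specRad_bound S hsymm hs k
  rw [hidx] at hcard
  have key : (∑ w ∈ wordsIn S ⊥ (2 * k),
        (((Finset.Icc 1 (2 * k)).filter fun i => prefixProd w i ∈ A).card : ℝ))
      ≤ ∑ w ∈ wordsIn S ⊥ (2 * k + 2),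
        (((Finset.Icc 1 (2 * k + 2)).filter
            fun i => prefixProd w i ∈ ((fun a => a * s) '' A)).card : ℝ) := by
    exact_mod_cast MuAux.count_le S hs hs' (2 * k) A
  rw [hidx]
  simp only [muMass]
  push_cast
  set c1 : ℝ := ((wordsIn S ⊥ (2 * k)).card : ℝ) with hc1def
  set c2 : ℝ := ((wordsIn S ⊥ (2 * k + 2)).card : ℝ) with hc2def
  set s1 : ℝ := ∑ w ∈ wordsIn S ⊥ (2 * k),
      (((Finset.Icc 1 (2 * k)).filter fun i => prefixProd w i ∈ A).card : ℝ) with hs1def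
  set s2 : ℝ := ∑ w ∈ wordsIn S ⊥ (2 * k + 2),
      (((Finset.Icc 1 (2 * k + 2)).filter
          fun i => prefixProd w i ∈ ((fun a => a * s) '' A)).card : ℝ) with hs2def
  have hs1 : 0 ≤ s1 := Finset.sum_nonneg fun w _ => by positivity
  have hD : (0 : ℝ) < (2 * (k : ℝ) + 2) * c2 :=
    mul_pos (by linarith) hc2
  have hDinv : (0 : ℝ) ≤ 1 / ((2 * (k : ℝ) + 2) * c2) := by
    exact (one_div_nonneg).mpr hD.le
  have hne1 : (2 * (k : ℝ)) ≠ 0 := by linarith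
  have hne2 : c1 ≠ 0 := hc1.ne'
  have hne3 : c2 ≠ 0 := hc2.ne'
  have hne4 : (2 * (k : ℝ) + 2) ≠ 0 := by linarith
  have h2nd : (2 * (k : ℝ) * c1 / ((2 * (k : ℝ) + 2) * c2)) * (1 / (2 * (k : ℝ) * c1) * s1)
      ≤ 1 / ((2 * (k : ℝ) + 2) * c2) * s2 := by
    have hr : (2 * (k : ℝ) * c1 / ((2 * (k : ℝ) + 2) * c2)) * (1 / (2 * (k : ℝ) * c1) * s1)
        = 1 / ((2 * (k : ℝ) + 2) * c2) * s1 := by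
      field_simp
    rw [hr]
    exact mul_le_mul_of_nonneg_left key hDinv
  constructor
  · rw [ge_iff_le]
    have hρne : specRad S ⊥ ≠ 0 := hρ0.ne'
    have hqne : (S.card : ℝ) ≠ 0 := hq0.ne'
    have hkne : ((k : ℝ) + 1) ≠ 0 := by linarith
    have hcoef : (k : ℝ) / (((k : ℝ) + 1) * (S.card : ℝ) ^ 2 * specRad S ⊥ ^ 2)
          * (1 / (2 * (k : ℝ) * c1))
        ≤ 1 / ((2 * (k : ℝ) + 2) * c2) := by
      have h1 : (k : ℝ) / (((k : ℝ) + 1) * (S.card : ℝ) ^ 2 * specRad S ⊥ ^ 2)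
            * (1 / (2 * (k : ℝ) * c1))
          = 1 / (2 * ((k : ℝ) + 1) * (S.card : ℝ) ^ 2 * specRad S ⊥ ^ 2 * c1) := by
        field_simp
      rw [h1]
      apply one_div_le_one_div_of_le hD
      calc (2 * (k : ℝ) + 2) * c2
          ≤ (2 * (k : ℝ) + 2) * (specRad S ⊥ ^ 2 * ((S.card : ℝ) ^ 2 * c1)) := by
            apply mul_le_mul_of_nonneg_left hcard (by linarith)
        _ = 2 * ((k : ℝ) + 1) * (S.card : ℝ) ^ 2 * specRad S ⊥ ^ 2 * c1 := by ring
    calc (k : ℝ) / (((k : ℝ) + 1) * (S.card : ℝ) ^ 2 * specRad S ⊥ ^ 2)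
          * (1 / (2 * (k : ℝ) * c1) * s1)
        = ((k : ℝ) / (((k : ℝ) + 1) * (S.card : ℝ) ^ 2 * specRad S ⊥ ^ 2)
            * (1 / (2 * (k : ℝ) * c1))) * s1 := by ring
      _ ≤ (1 / ((2 * (k : ℝ) + 2) * c2)) * s1 := mul_le_mul_of_nonneg_right hcoef hs1
      _ ≤ (1 / ((2 * (k : ℝ) + 2) * c2)) * s2 := mul_le_mul_of_nonneg_left key hDinv
  · rw [ge_iff_le]
    exact h2nd

end
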